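/- Fix domains i and j and suppose D_j : 𝒵 × 𝒩_j → 𝒳_j is γ_j-Lipschitz. Define Q_{X_{i→j}} as the pushforward of P_{X_i} ⊗ P_{N_j} under (x, n) ↦ D_j(π^Z(E_i(x)), n). Then for every coupling γ of E_i # P_{X_i} and P_Z ⊗ P_{N_i} (measures on 𝒵 × 𝒩_i), there exists a coupling π of Q_{X_{i→j}} and the pushforward D_j # (P_Z ⊗ P_{N_j}) such that ∫ d_j(x, y) dπ(x, y) ≤ γ_j ∫ d̃_i(u, v) dγ(u, v). -/

import Mathlib

open MeasureTheory

/-- First term of the transport error bound: if `D_j` is `γ_j`-Lipschitz with respect to the sum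
metric on `Z × N_j`, then for any coupling `γ` of `E_i # P_{X_i}` and `P_Z ⊗ P_{N_i}`, there is
a coupling `π` of the translated distribution `Q_{X_{i→j}}` and `D_j # (P_Z ⊗ P_{N_j})` with
cost at most `γ_j` times the cost of `γ` (with respect to the sum metric `d̃_i`). -/
theorem transport_error_first_term
    {Xi Xj Z Ni Nj : Type*}
    [MetricSpace Xi] [CompleteSpace Xi] [TopologicalSpace.SeparableSpace Xi]
    [MeasurableSpace Xi] [BorelSpace Xi]
    [MetricSpace Xj] [CompleteSpace Xj] [TopologicalSpace.SeparableSpace Xj]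
    [MeasurableSpace Xj] [BorelSpace Xj]
    [MetricSpace Z] [CompleteSpace Z] [TopologicalSpace.SeparableSpace Z]
    [MeasurableSpace Z] [BorelSpace Z]
    [MetricSpace Ni] [CompleteSpace Ni] [TopologicalSpace.SeparableSpace Ni]
    [MeasurableSpace Ni] [BorelSpace Ni]
    [MetricSpace Nj] [CompleteSpace Nj] [TopologicalSpace.SeparableSpace Nj]
    [MeasurableSpace Nj] [BorelSpace Nj]
    (PXi : Measure Xi) [IsProbabilityMeasure PXi]
    (PXj : Measure Xj) [IsProbabilityMeasure PXj]
    (PZ : Measure Z) [IsProbabilityMeasure PZ]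
    (PNi : Measure Ni) [IsProbabilityMeasure PNi]
    (PNj : Measure Nj) [IsProbabilityMeasure PNj]
    (Ei : Xi → Z × Ni) (Dj : Z × Nj → Xj)
    (hEi : Measurable Ei) (hDj : Measurable Dj)
    (γj : NNReal)
    (hLip : ∀ u v : Z × Nj,
      edist (Dj u) (Dj v) ≤ (γj : ENNReal) * (edist u.1 v.1 + edist u.2 v.2))
    (γ : Measure ((Z × Ni) × (Z × Ni))) [IsProbabilityMeasure γ]
    (hγfst : γ.map Prod.fst = PXi.map Ei)
    (hγsnd : γ.map Prod.snd = PZ.prod PNi) :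
    ∃ π : Measure (Xj × Xj), IsProbabilityMeasure π ∧
      π.map Prod.fst = Measure.map (fun p : Xi × Nj => Dj ((Ei p.1).1, p.2)) (PXi.prod PNj) ∧
      π.map Prod.snd = (PZ.prod PNj).map Dj ∧
      ∫⁻ p, edist p.1 p.2 ∂π ≤
        (γj : ENNReal) * ∫⁻ p, (edist p.1.1 p.2.1 + edist p.1.2 p.2.2) ∂γ := by
  set ρ : Measure (((Z × Ni) × (Z × Ni)) × Nj) := γ.prod PNj with hρ
  set F : ((Z × Ni) × (Z × Ni)) × Nj → Xj × Xj :=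
    fun q => (Dj (q.1.1.1, q.2), Dj (q.1.2.1, q.2)) with hF
  have hFm : Measurable F :=
    (hDj.comp ((measurable_fst.comp measurable_fst).fst.prodMk measurable_snd)).prodMk
      (hDj.comp ((measurable_snd.comp measurable_fst).fst.prodMk measurable_snd))
  -- the "shared latent + fresh noise" decoding map
  set g1 : (Z × Ni) × Nj → Xj := fun p => Dj (p.1.1, p.2) with hg1def
  have hg1 : Measurable g1 := hDj.comp (measurable_fst.fst.prodMk measurable_snd)
  have hG1 : Measurable (Prod.map (Prod.fst : (Z × Ni) × (Z × Ni) → Z × Ni) (id : Nj → Nj)) :=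
    measurable_fst.prodMap measurable_id
  have hG2 : Measurable (Prod.map (Prod.snd : (Z × Ni) × (Z × Ni) → Z × Ni) (id : Nj → Nj)) :=
    measurable_snd.prodMap measurable_id
  refine ⟨ρ.map F, ?_, ?_, ?_, ?_⟩
  · exact Measure.isProbabilityMeasure_map hFm.aemeasurable
  · -- first marginal
    calc (ρ.map F).map Prod.fst
        = ρ.map (g1 ∘ Prod.map Prod.fst id) := Measure.map_map measurable_fst hFm
      _ = (ρ.map (Prod.map Prod.fst id)).map g1 := (Measure.map_map hg1 hG1).symm
      _ = ((γ.map Prod.fst).prod (PNj.map id)).map g1 := by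
          rw [hρ, Measure.map_prod_map _ _ measurable_fst measurable_id]
      _ = ((PXi.map Ei).prod (PNj.map id)).map g1 := by rw [hγfst]
      _ = ((PXi.prod PNj).map (Prod.map Ei id)).map g1 := by
          rw [Measure.map_prod_map _ _ hEi measurable_id]
      _ = (PXi.prod PNj).map (g1 ∘ Prod.map Ei id) :=
          Measure.map_map hg1 (hEi.prodMap measurable_id)
      _ = Measure.map (fun p : Xi × Nj => Dj ((Ei p.1).1, p.2)) (PXi.prod PNj) := rfl
  · -- second marginal
    have hPZNj : ((PZ.prod PNi).prod PNj).map
        (Prod.map (Prod.fst : Z × Ni → Z) (id : Nj → Nj)) = PZ.prod PNj := by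
      rw [← Measure.map_prod_map _ _ measurable_fst measurable_id, Measure.map_fst_prod,
        Measure.map_id]
      simp
    calc (ρ.map F).map Prod.snd
        = ρ.map (g1 ∘ Prod.map Prod.snd id) := Measure.map_map measurable_snd hFm
      _ = (ρ.map (Prod.map Prod.snd id)).map g1 := (Measure.map_map hg1 hG2).symm
      _ = ((γ.map Prod.snd).prod (PNj.map id)).map g1 := by
          rw [hρ, Measure.map_prod_map _ _ measurable_snd measurable_id]
      _ = ((PZ.prod PNi).prod PNj).map g1 := by rw [hγsnd, Measure.map_id]
      _ = ((PZ.prod PNi).prod PNj).map (Dj ∘ Prod.map Prod.fst id) := rfl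
      _ = (((PZ.prod PNi).prod PNj).map (Prod.map Prod.fst id)).map Dj :=
          (Measure.map_map hDj (measurable_fst.fst.prodMk measurable_snd)).symm
      _ = (PZ.prod PNj).map Dj := by rw [hPZNj]
  · -- cost bound
    have hcost : ∫⁻ p, edist p.1 p.2 ∂(ρ.map F) = ∫⁻ q, edist (F q).1 (F q).2 ∂ρ :=
      lintegral_map measurable_edist hFm
    have hbound : ∀ q : ((Z × Ni) × (Z × Ni)) × Nj,
        edist (F q).1 (F q).2 ≤ (γj : ENNReal) * edist q.1.1.1 q.1.2.1 := by
      intro q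
      simpa using hLip (q.1.1.1, q.2) (q.1.2.1, q.2)
    have hmeasγ : Measurable (fun p : (Z × Ni) × (Z × Ni) => edist p.1.1 p.2.1) :=
      measurable_fst.fst.edist measurable_snd.fst
    have hfstρ : ρ.map Prod.fst = γ := by
      rw [hρ, Measure.map_fst_prod]; simp
    have hswap : ∫⁻ q, edist q.1.1.1 q.1.2.1 ∂ρ = ∫⁻ p, edist p.1.1 p.2.1 ∂γ := by
      have := lintegral_map (μ := ρ) hmeasγ (measurable_fst :
        Measurable (Prod.fst : (((Z × Ni) × (Z × Ni)) × Nj) → (Z × Ni) × (Z × Ni)))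
      rw [hfstρ] at this
      exact this.symm
    calc ∫⁻ p, edist p.1 p.2 ∂(ρ.map F)
        = ∫⁻ q, edist (F q).1 (F q).2 ∂ρ := hcost
      _ ≤ ∫⁻ q, (γj : ENNReal) * edist q.1.1.1 q.1.2.1 ∂ρ := lintegral_mono hbound
      _ = (γj : ENNReal) * ∫⁻ q, edist q.1.1.1 q.1.2.1 ∂ρ :=
          lintegral_const_mul _ (hmeasγ.comp measurable_fst)
      _ = (γj : ENNReal) * ∫⁻ p, edist p.1.1 p.2.1 ∂γ := by rw [hswap]
      _ ≤ (γj : ENNReal) * ∫⁻ p, (edist p.1.1 p.2.1 + edist p.1.2 p.2.2) ∂γ := by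
          gcongr with p
          exact le_self_add
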